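/- For a = 1, 2, 3, the operators U_a on Θ^{4ℓ+}_{00} defined by (U₁f)(z) = e^{πiℓ} f(z + 1/2), (U₃f)(z) = e^{πiℓ} e^{πiℓ(4z+τ)} f(z + τ/2), and U₂ = U₃U₁ satisfy U_a² = (−1)^{2ℓ} · id and U_a U_b = (−1)^{2ℓ} U_b U_a for a ≠ b. -/
import Mathlib


open Real

/-- Membership in the space `Θ^{4ℓ+}_{00}` (with `L = 2ℓ`). -/
def InThetaSpace (τ : ℂ) (L : ℕ) (f : ℂ → ℂ) : Prop :=
  Differentiable ℂ f ∧ (∀ z, f (z + 1) = f z) ∧ (∀ z, f (-z) = f z) ∧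
    ∀ z, f (z + τ) = Complex.exp (-(2 * (L : ℂ)) * (π : ℂ) * Complex.I * (2 * z + τ)) * f z

/-- `(U₁ f)(z) = e^{πiℓ} f(z + 1/2)`, with `ℓ = L/2`. -/
noncomputable def U1op (L : ℕ) (f : ℂ → ℂ) (z : ℂ) : ℂ :=
  Complex.exp ((π : ℂ) * Complex.I * ((L : ℂ) / 2)) * f (z + 1 / 2)

/-- `(U₃ f)(z) = e^{πiℓ} e^{πiℓ(4z+τ)} f(z + τ/2)`, with `ℓ = L/2`. -/
noncomputable def U3op (τ : ℂ) (L : ℕ) (f : ℂ → ℂ) (z : ℂ) : ℂ :=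
  Complex.exp ((π : ℂ) * Complex.I * ((L : ℂ) / 2)) *
    Complex.exp ((π : ℂ) * Complex.I * ((L : ℂ) / 2) * (4 * z + τ)) * f (z + τ / 2)

/-- The operators `U₁`, `U₂ = U₃U₁`, `U₃`, indexed by `Fin 3` (index `0 ↦ U₁`,
`1 ↦ U₂`, `2 ↦ U₃`). -/
noncomputable def Uop (τ : ℂ) (L : ℕ) : Fin 3 → (ℂ → ℂ) → (ℂ → ℂ) :=
  ![U1op L, fun f => U3op τ L (U1op L f), U3op τ L]

private lemma exp_two_pi_int (m : ℤ) : Complex.exp (2 * (π:ℂ) * Complex.I * m) = 1 := by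
  rw [show 2 * (π:ℂ) * Complex.I * m = m * (2 * π * Complex.I) by ring]
  exact Complex.exp_int_mul_two_pi_mul_I m

private lemma exp_congr {A B : ℂ} (m : ℤ) (h : A = B + 2 * (π:ℂ) * Complex.I * m) :
    Complex.exp A = Complex.exp B := by
  rw [h, Complex.exp_add, exp_two_pi_int, mul_one]

private lemma exp_pi_L (L : ℕ) : Complex.exp ((π:ℂ) * Complex.I * L) = (-1) ^ L := by
  rw [show (π:ℂ) * Complex.I * L = L * (π * Complex.I) by ring, Complex.exp_nat_mul,
    Complex.exp_pi_mul_I]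

private lemma U1U1 (L : ℕ) (f : ℂ → ℂ) (h1 : ∀ z, f (z + 1) = f z) (z : ℂ) :
    U1op L (U1op L f) z = (-1) ^ L * f z := by
  rw [U1op, U1op, show z + 1/2 + 1/2 = z + (1:ℂ) by ring, h1, ← exp_pi_L L]
  rw [← mul_assoc, ← Complex.exp_add]
  congr 2
  ring

private lemma U3U3 (τ : ℂ) (L : ℕ) (f : ℂ → ℂ)
    (ht : ∀ z, f (z + τ) = Complex.exp (-(2 * (L : ℂ)) * (π : ℂ) * Complex.I * (2 * z + τ)) * f z)
    (z : ℂ) : U3op τ L (U3op τ L f) z = (-1) ^ L * f z := by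
  rw [U3op, U3op, show z + τ/2 + τ/2 = z + τ by ring, ht, ← exp_pi_L L]
  simp only [← mul_assoc, ← Complex.exp_add]
  congr 2
  ring

private lemma U1U3 (τ : ℂ) (L : ℕ) (f : ℂ → ℂ) (z : ℂ) :
    U1op L (U3op τ L f) z = (-1) ^ L * U3op τ L (U1op L f) z := by
  rw [U1op, U3op, U3op, U1op, ← exp_pi_L L,
    show z + 1/2 + τ/2 = z + τ/2 + 1/2 by ring]
  simp only [← mul_assoc, ← Complex.exp_add]
  congr 2
  ring

private lemma U1_smul (L : ℕ) (c : ℂ) (f : ℂ → ℂ) :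
    U1op L (fun w => c * f w) = fun z => c * U1op L f z := by
  funext z
  simp only [U1op]
  ring

private lemma U3_smul (τ : ℂ) (L : ℕ) (c : ℂ) (f : ℂ → ℂ) :
    U3op τ L (fun w => c * f w) = fun z => c * U3op τ L f z := by
  funext z
  simp only [U3op]
  ring

/-- `U₁`, `U₃` preserve `Θ^{4ℓ+}_{00}`, and on that space the operators satisfy
`U_a² = (−1)^{2ℓ}` and `U_a U_b = (−1)^{2ℓ} U_b U_a` for `a ≠ b` (`L = 2ℓ`). -/
theorem Uop_relations (τ : ℂ) (hτ : 0 < τ.im) (L : ℕ) (hL : 0 < L)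
    (f : ℂ → ℂ) (hf : InThetaSpace τ L f) :
    InThetaSpace τ L (U1op L f) ∧ InThetaSpace τ L (U3op τ L f) ∧
      (∀ a : Fin 3, ∀ z, Uop τ L a (Uop τ L a f) z = (-1 : ℂ) ^ L * f z) ∧
      ∀ a b : Fin 3, a ≠ b → ∀ z,
        Uop τ L a (Uop τ L b f) z = (-1 : ℂ) ^ L * Uop τ L b (Uop τ L a f) z := by
  obtain ⟨hd, h1, he, ht⟩ := hf
  have hsq : ((-1:ℂ))^L * (-1)^L = 1 := by
    rw [← mul_pow]
    norm_num
  -- U₁ preserves the space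
  have pres1 : InThetaSpace τ L (U1op L f) := by
    refine ⟨?_, ?_, ?_, ?_⟩
    · exact Differentiable.const_mul (hd.comp (differentiable_id.add_const _)) _
    · intro z
      simp only [U1op]
      rw [show z + 1 + 1/2 = z + 1/2 + 1 by ring, h1]
    · intro z
      simp only [U1op]
      rw [show -z + 1/2 = -(z - 1/2) by ring, he, ← h1 (z - 1/2),
        show z - 1/2 + 1 = z + 1/2 by ring]
    · intro z
      simp only [U1op]
      rw [show z + τ + 1/2 = z + 1/2 + τ by ring, ht]
      simp only [← mul_assoc, ← Complex.exp_add]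
      congr 1
      refine exp_congr (-L) ?_
      push_cast
      ring
  -- U₃ preserves the space
  have pres3 : InThetaSpace τ L (U3op τ L f) := by
    refine ⟨?_, ?_, ?_, ?_⟩
    · exact Differentiable.mul
        ((Differentiable.const_mul (Complex.differentiable_exp.comp
          (by fun_prop)) _))
        (hd.comp (differentiable_id.add_const _))
    · intro z
      simp only [U3op]
      rw [show z + 1 + τ/2 = z + τ/2 + 1 by ring, h1]
      congr 2
      refine exp_congr L ?_
      push_cast
      ring
    · intro z
      simp only [U3op]
      rw [show -z + τ/2 = -(z - τ/2) by ring, he,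
        show z + τ/2 = z - τ/2 + τ by ring, ht (z - τ/2)]
      simp only [← mul_assoc, ← Complex.exp_add]
      congr 2
      ring
    · intro z
      simp only [U3op]
      rw [show z + τ + τ/2 = z + τ/2 + τ by ring, ht (z + τ/2)]
      simp only [← mul_assoc, ← Complex.exp_add]
      congr 2
      ring
  -- function-level versions of the basic relations
  have hA : U1op L (U1op L f) = fun z => (-1:ℂ)^L * f z := funext fun z => U1U1 L f h1 z
  have hC : ∀ g : ℂ → ℂ, U1op L (U3op τ L g) = fun z => (-1:ℂ)^L * U3op τ L (U1op L g) z :=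
    fun g => funext fun z => U1U3 τ L g z
  have h32 : ∀ z, U3op τ L (U3op τ L (U1op L f)) z = (-1:ℂ)^L * U1op L f z :=
    fun z => U3U3 τ L (U1op L f) pres1.2.2.2 z
  -- U₂ applied twice
  have hU2sq : ∀ z, U3op τ L (U1op L (U3op τ L (U1op L f))) z = (-1:ℂ)^L * f z := by
    intro z
    rw [hC (U1op L f), U3_smul]
    beta_reduce
    rw [hA, U3_smul, U3_smul]
    beta_reduce
    rw [U3U3 τ L f ht z, ← mul_assoc, hsq, one_mul]
  -- U₁ ∘ U₂ and U₂ ∘ U₁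
  have h12 : ∀ z, U1op L (U3op τ L (U1op L f)) z = U3op τ L f z := by
    intro z
    rw [U1U3 τ L (U1op L f) z, hA, U3_smul]
    beta_reduce
    rw [← mul_assoc, hsq, one_mul]
  have h21 : ∀ z, U3op τ L (U1op L (U1op L f)) z = (-1:ℂ)^L * U3op τ L f z := by
    intro z
    rw [hA, U3_smul]
  -- U₂ ∘ U₃
  have h23 : ∀ z, U3op τ L (U1op L (U3op τ L f)) z = U1op L f z := by
    intro z
    rw [hC f, U3_smul]
    beta_reduce
    rw [h32 z, ← mul_assoc, hsq, one_mul]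
  refine ⟨pres1, pres3, ?_, ?_⟩
  · intro a z
    fin_cases a
    · simpa [Uop] using U1U1 L f h1 z
    · simpa [Uop] using hU2sq z
    · simpa [Uop] using U3U3 τ L f ht z
  · intro a b hab z
    fin_cases a <;> fin_cases b <;>
      simp only [Uop, show ((⟨0,by norm_num⟩ : Fin 3)) = 0 from rfl,
        show ((⟨1,by norm_num⟩ : Fin 3)) = 1 from rfl, show ((⟨2,by norm_num⟩ : Fin 3)) = 2 from rfl,
        Matrix.cons_val_zero, Matrix.cons_val_one, Matrix.head_cons,
        Matrix.cons_val_two, Matrix.tail_cons]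
    · exact absurd rfl hab
    · -- a = 0, b = 1
      rw [h12 z, h21 z, ← mul_assoc, hsq, one_mul]
    · -- a = 0, b = 2
      exact U1U3 τ L f z
    · -- a = 1, b = 0
      rw [h21 z, h12 z]
    · exact absurd rfl hab
    · -- a = 1, b = 2
      rw [h23 z, h32 z, ← mul_assoc, hsq, one_mul]
    · -- a = 2, b = 0
      rw [U1U3 τ L f z, ← mul_assoc, hsq, one_mul]
    · -- a = 2, b = 1
      rw [h32 z, h23 z]
    · exact absurd rfl hab
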